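/- Let f₁ and f₂ be multiplicative functions ℕ → ℂ such that, for j = 1,2, f_j satisfies with respect to an integer m_j ≥ 1 the conditions: (i) for some prime q dividing m_j, ∑_{k=0}^∞ f_j(q^k)/q^k = 0; (ii) for each prime power p^a exactly dividing m_j, f_j(p^k) = f_j(p^a) for all k ≥ a; (iii) for each prime p with gcd(p,m_j) = 1, f_j(p^k) = 1 for all k ≥ 1. Let f = f₁ ∗ f₂. Then for all real x > m₁m₂, ∑_{n≤x} f(n) = ∑_{n | m₁m₂} (f ∗ μ ∗ μ)(n) · Δ(x/n), where μ is the Möbius function. -/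

import Mathlib

/-- `f` is multiplicative: `f 1 = 1` and `f (m*n) = f m * f n` for coprime `m, n`. -/
def IsMultiplicativeFn (f : ℕ → ℂ) : Prop :=
  f 1 = 1 ∧ ∀ m n : ℕ, Nat.Coprime m n → f (m * n) = f m * f n

/-- Conditions i-iii of Theorem 2 with respect to the integer `m`. -/
def SatisfiesConds (f : ℕ → ℂ) (m : ℕ) : Prop :=
  (∃ q : ℕ, q.Prime ∧ q ∣ m ∧ ∑' k : ℕ, f (q ^ k) / (q : ℂ) ^ k = 0) ∧
  (∀ p a : ℕ, p.Prime → p ^ a ∣ m → ¬ p ^ (a + 1) ∣ m →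
    ∀ k : ℕ, a ≤ k → f (p ^ k) = f (p ^ a)) ∧
  (∀ p : ℕ, p.Prime → Nat.Coprime p m → ∀ k : ℕ, 1 ≤ k → f (p ^ k) = 1)

/-- Dirichlet convolution. -/
noncomputable def dconv (f g : ℕ → ℂ) : ℕ → ℂ :=
  fun n => ∑ d ∈ n.divisors, f d * g (n / d)

/-- The Möbius function, complex valued. -/
def moebiusC : ℕ → ℂ := fun n => ((ArithmeticFunction.moebius n : ℤ) : ℂ)

/-- The error term in the Dirichlet divisor problem. -/
noncomputable def Δ (x : ℝ) : ℝ :=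
  (∑ n ∈ Finset.Icc 1 ⌊x⌋₊, (n.divisors.card : ℝ)) - x * Real.log x -
    (2 * Real.eulerMascheroniConstant - 1) * x

open Finset ArithmeticFunction
open scoped ArithmeticFunction.zeta

set_option maxHeartbeats 1000000

/-! ### Bridging `ℕ → ℂ` functions with `ArithmeticFunction ℂ` -/

noncomputable def toAF (f : ℕ → ℂ) : ArithmeticFunction ℂ :=
  ⟨fun n => if n = 0 then 0 else f n, rfl⟩

lemma toAF_apply (f : ℕ → ℂ) {n : ℕ} (hn : n ≠ 0) : toAF f n = f n := if_neg hn

lemma dconv_eq (f g : ℕ → ℂ) (n : ℕ) : dconv f g n = (toAF f * toAF g) n := by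
  rw [mul_apply, Nat.sum_divisorsAntidiagonal (fun a b => toAF f a * toAF g b)]
  rcases eq_or_ne n 0 with rfl | hn
  · simp [dconv]
  · refine Finset.sum_congr rfl fun d hd => ?_
    rw [Nat.mem_divisors] at hd
    rw [toAF_apply _ (ne_of_gt (Nat.pos_of_mem_divisors (Nat.mem_divisors.2 hd))),
      toAF_apply _ (Nat.div_ne_zero_iff.2 ⟨ne_of_gt (Nat.pos_of_dvd_of_pos hd.1
        (Nat.pos_of_ne_zero hn)), Nat.le_of_dvd (Nat.pos_of_ne_zero hn) hd.1⟩)]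

lemma toAF_dconv (f g : ℕ → ℂ) : toAF (dconv f g) = toAF f * toAF g := by
  ext n
  rcases eq_or_ne n 0 with rfl | hn
  · simp
  · rw [toAF_apply _ hn, dconv_eq]

lemma toAF_moebiusC : toAF moebiusC = (↑(moebius) : ArithmeticFunction ℂ) := by
  ext n
  rcases eq_or_ne n 0 with rfl | hn
  · simp [moebiusC]
  · rw [toAF_apply _ hn, intCoe_apply]; rfl

lemma toAF_mult (f : ℕ → ℂ) (hf : IsMultiplicativeFn f) : (toAF f).IsMultiplicative := by
  constructor
  · rw [toAF_apply _ one_ne_zero, hf.1]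
  · intro m n hmn
    rcases eq_or_ne m 0 with rfl | hm
    · rcases Nat.coprime_zero_left n |>.1 hmn with rfl
      simp
    rcases eq_or_ne n 0 with rfl | hn
    · rcases Nat.coprime_zero_right m |>.1 hmn with rfl
      simp
    rw [toAF_apply _ (Nat.mul_ne_zero hm hn), toAF_apply _ hm, toAF_apply _ hn, hf.2 m n hmn]

/-! ### Values of Dirichlet products at prime powers -/

lemma mul_apply_prime_pow (A B : ArithmeticFunction ℂ) {p : ℕ} (hp : p.Prime) (k : ℕ) :
    (A * B) (p ^ k) = ∑ i ∈ range (k + 1), A (p ^ i) * B (p ^ (k - i)) := by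
  rw [mul_apply, Nat.sum_divisorsAntidiagonal (fun a b => A a * B b),
    Nat.sum_divisors_prime_pow hp]
  refine Finset.sum_congr rfl fun i hi => ?_
  rw [mem_range, Nat.lt_succ_iff] at hi
  rw [Nat.pow_div hi hp.pos]

lemma mul_moebius_prime_pow (U : ArithmeticFunction ℂ) {p : ℕ} (hp : p.Prime) {k : ℕ}
    (hk : 1 ≤ k) :
    (U * ↑(moebius)) (p ^ k) = U (p ^ k) - U (p ^ (k - 1)) := by
  rw [mul_apply_prime_pow _ _ hp]
  have hsub : ({k - 1, k} : Finset ℕ) ⊆ range (k + 1) := by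
    intro i hi
    rcases Finset.mem_insert.1 hi with rfl | hi
    · exact mem_range.2 (by omega)
    · rw [Finset.mem_singleton] at hi; exact mem_range.2 (by omega)
  rw [← Finset.sum_subset hsub]
  · rw [Finset.sum_pair (by omega)]
    have h1 : (↑(moebius) : ArithmeticFunction ℂ) (p ^ (k - (k-1))) = -1 := by
      have : k - (k - 1) = 1 := by omega
      rw [this, pow_one, intCoe_apply, moebius_apply_prime hp]
      norm_num
    have h2 : (↑(moebius) : ArithmeticFunction ℂ) (p ^ (k - k)) = 1 := by
      simp
    rw [h1, h2]
    ring
  · intro i hi hnotin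
    have hik : i ≤ k := by rw [mem_range] at hi; omega
    have h2le : 2 ≤ k - i := by
      simp only [Finset.mem_insert, Finset.mem_singleton] at hnotin
      omega
    have : (↑(moebius) : ArithmeticFunction ℂ) (p ^ (k - i)) = 0 := by
      rw [intCoe_apply, moebius_apply_prime_pow hp (by omega), if_neg (by omega)]
      norm_num
    rw [this, mul_zero]

/-! ### Support lemmas -/

lemma H_support (f : ℕ → ℂ) (m : ℕ) (hm : m ≠ 0)
    (hcond : ∀ p a : ℕ, p.Prime → p ^ a ∣ m → ¬ p ^ (a + 1) ∣ m →
      ∀ k : ℕ, a ≤ k → f (p ^ k) = f (p ^ a))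
    {p : ℕ} (hp : p.Prime) {k : ℕ} (hk : m.factorization p < k) :
    (toAF f * ↑(moebius)) (p ^ k) = 0 := by
  have hk1 : 1 ≤ k := by omega
  set a := m.factorization p with ha
  have hc := hcond p a hp (Nat.ordProj_dvd m p) (Nat.pow_succ_factorization_not_dvd hm hp)
  rw [mul_moebius_prime_pow _ hp hk1,
    toAF_apply _ (pow_ne_zero _ hp.ne_zero), toAF_apply _ (pow_ne_zero _ hp.ne_zero),
    hc k (by omega), hc (k-1) (by omega), sub_self]

lemma G_support_pp (H₁ H₂ : ArithmeticFunction ℂ) (m₁ m₂ : ℕ) (hm₁ : m₁ ≠ 0) (hm₂ : m₂ ≠ 0)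
    (hs₁ : ∀ p k : ℕ, p.Prime → m₁.factorization p < k → H₁ (p ^ k) = 0)
    (hs₂ : ∀ p k : ℕ, p.Prime → m₂.factorization p < k → H₂ (p ^ k) = 0)
    {p : ℕ} (hp : p.Prime) {k : ℕ} (hk : (m₁ * m₂).factorization p < k) :
    (H₁ * H₂) (p ^ k) = 0 := by
  rw [mul_apply_prime_pow _ _ hp]
  refine Finset.sum_eq_zero fun i hi => ?_
  rw [mem_range, Nat.lt_succ_iff] at hi
  rw [Nat.factorization_mul hm₁ hm₂, Finsupp.add_apply] at hk
  rcases lt_or_ge (m₁.factorization p) i with h | h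
  · rw [hs₁ p i hp h, zero_mul]
  · rw [hs₂ p (k - i) hp (by omega), mul_zero]

lemma G_support (G : ArithmeticFunction ℂ) (hG : G.IsMultiplicative) (M : ℕ) (hM : M ≠ 0)
    (hpp : ∀ p k : ℕ, p.Prime → M.factorization p < k → G (p ^ k) = 0)
    {d : ℕ} (hd : d ≠ 0) (hdvd : ¬ d ∣ M) : G d = 0 := by
  rw [hG.multiplicative_factorization G hd]
  have : ¬ d.factorization ≤ M.factorization := by
    rw [← Nat.factorization_le_iff_dvd hd hM] at hdvd
    exact hdvd
  rw [Finsupp.le_def, not_forall] at this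
  obtain ⟨p, hplt⟩ := this
  push_neg at hplt
  have hpsupp : p ∈ d.factorization.support := by
    rw [Nat.support_factorization, Nat.mem_primeFactors]
    refine ⟨?_, ?_, hd⟩
    · by_contra h
      rw [Nat.factorization_eq_zero_of_not_prime d h] at hplt; omega
    · by_contra h
      rw [Nat.factorization_eq_zero_of_not_dvd h] at hplt; omega
  have hp : p.Prime :=
    Nat.prime_of_mem_primeFactors (by rwa [Nat.support_factorization] at hpsupp)
  exact Finset.prod_eq_zero hpsupp (hpp p _ hp hplt)

/-! ### Triangular reindexing and local Cauchy products -/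

lemma tri (n : ℕ) (F : ℕ → ℕ → ℂ) :
    ∑ k ∈ range n, ∑ i ∈ range (k + 1), F i (k - i) =
    ∑ p ∈ (range n ×ˢ range n).filter (fun p => p.1 + p.2 < n), F p.1 p.2 := by
  rw [Finset.sum_sigma']
  refine Finset.sum_nbij' (fun x => (x.2, x.1 - x.2)) (fun p => ⟨p.1 + p.2, p.1⟩) ?_ ?_ ?_ ?_ ?_
  · rintro ⟨k, i⟩ h
    simp only [Finset.mem_sigma, mem_range] at h
    simp only [Finset.mem_filter, Finset.mem_product, mem_range]
    omega
  · rintro ⟨i, j⟩ h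
    simp only [Finset.mem_filter, Finset.mem_product, mem_range] at h
    simp only [Finset.mem_sigma, mem_range]
    omega
  · rintro ⟨k, i⟩ h
    simp only [Finset.mem_sigma, mem_range] at h
    have hik : i + (k - i) = k := by omega
    simp only [Sigma.mk.inj_iff]
    exact ⟨hik, HEq.rfl⟩
  · rintro ⟨i, j⟩ h
    simp [Nat.add_sub_cancel_left]
  · rintro ⟨k, i⟩ h
    rfl

lemma cauchy (a₁ a₂ : ℕ) (u v : ℕ → ℂ) (hu : ∀ i, a₁ < i → u i = 0)
    (hv : ∀ j, a₂ < j → v j = 0) (W : ℕ → ℕ → ℂ) :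
    ∑ k ∈ range (a₁ + a₂ + 1), ∑ i ∈ range (k + 1), W i (k - i) * (u i * v (k - i)) =
    ∑ i ∈ range (a₁ + 1), ∑ j ∈ range (a₂ + 1), W i j * (u i * v j) := by
  have h0 := tri (a₁ + a₂ + 1) (fun i j => W i j * (u i * v j))
  rw [h0]
  have h1 : ∑ p ∈ (range (a₁+a₂+1) ×ˢ range (a₁+a₂+1)).filter
      (fun p => p.1 + p.2 < a₁+a₂+1), W p.1 p.2 * (u p.1 * v p.2)
      = ∑ p ∈ range (a₁+a₂+1) ×ˢ range (a₁+a₂+1), W p.1 p.2 * (u p.1 * v p.2) := by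
    refine Finset.sum_subset (Finset.filter_subset _ _) ?_
    rintro ⟨i, j⟩ h hnot
    simp only [Finset.mem_filter, Finset.mem_product, mem_range] at h hnot
    have : a₁ < i ∨ a₂ < j := by omega
    rcases this with h' | h'
    · rw [hu i h', zero_mul, mul_zero]
    · rw [hv j h', mul_zero, mul_zero]
  rw [h1, Finset.sum_product]
  have h2 : ∀ i : ℕ, ∑ j ∈ range (a₂+1), W i j * (u i * v j)
      = ∑ j ∈ range (a₁+a₂+1), W i j * (u i * v j) := by
    intro i
    refine Finset.sum_subset (by intro j hj; rw [mem_range] at hj ⊢; omega) ?_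
    intro j hj hnot
    rw [hv j (by rw [mem_range] at hnot; omega), mul_zero, mul_zero]
  have h3 : ∑ i ∈ range (a₁+1), ∑ j ∈ range (a₁+a₂+1), W i j * (u i * v j)
      = ∑ i ∈ range (a₁+a₂+1), ∑ j ∈ range (a₁+a₂+1), W i j * (u i * v j) := by
    refine Finset.sum_subset (by intro i hi; rw [mem_range] at hi ⊢; omega) ?_
    intro i hi hnot
    refine Finset.sum_eq_zero fun j hj => ?_
    rw [hu i (by rw [mem_range] at hnot; omega), zero_mul, mul_zero]
  calc ∑ i ∈ range (a₁+a₂+1), ∑ j ∈ range (a₁+a₂+1), W i j * (u i * v j)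
      = ∑ i ∈ range (a₁+1), ∑ j ∈ range (a₁+a₂+1), W i j * (u i * v j) := h3.symm
    _ = ∑ i ∈ range (a₁+1), ∑ j ∈ range (a₂+1), W i j * (u i * v j) :=
        Finset.sum_congr rfl fun i _ => (h2 i).symm

section LocalLemmas
variable (H₁ H₂ : ArithmeticFunction ℂ) (m₁ m₂ : ℕ)

lemma G_pp_weighted (hm₁ : m₁ ≠ 0) (hm₂ : m₂ ≠ 0)
    (hs₁ : ∀ p k : ℕ, p.Prime → m₁.factorization p < k → H₁ (p ^ k) = 0)
    (hs₂ : ∀ p k : ℕ, p.Prime → m₂.factorization p < k → H₂ (p ^ k) = 0)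
    {q : ℕ} (hq : q.Prime) (x : ℂ) (W : ℕ → ℕ → ℂ) :
    ∑ k ∈ range ((m₁ * m₂).factorization q + 1),
      ∑ i ∈ range (k + 1),
        W i (k - i) * ((H₁ (q ^ i) * x ^ i) * (H₂ (q ^ (k - i)) * x ^ (k - i)))
    = ∑ i ∈ range (m₁.factorization q + 1), ∑ j ∈ range (m₂.factorization q + 1),
        W i j * ((H₁ (q ^ i) * x ^ i) * (H₂ (q ^ j) * x ^ j)) := by
  have he : (m₁ * m₂).factorization q = m₁.factorization q + m₂.factorization q := by
    rw [Nat.factorization_mul hm₁ hm₂, Finsupp.add_apply]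
  rw [he]
  exact cauchy (m₁.factorization q) (m₂.factorization q)
    (fun i => H₁ (q ^ i) * x ^ i) (fun j => H₂ (q ^ j) * x ^ j)
    (fun i hi => by show H₁ (q ^ i) * x ^ i = 0; rw [hs₁ q i hq hi, zero_mul])
    (fun j hj => by show H₂ (q ^ j) * x ^ j = 0; rw [hs₂ q j hq hj, zero_mul]) W

lemma Zloc (hm₁ : m₁ ≠ 0) (hm₂ : m₂ ≠ 0)
    (hs₁ : ∀ p k : ℕ, p.Prime → m₁.factorization p < k → H₁ (p ^ k) = 0)
    (hs₂ : ∀ p k : ℕ, p.Prime → m₂.factorization p < k → H₂ (p ^ k) = 0)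
    {q : ℕ} (hq : q.Prime) (x : ℂ) :
    ∑ k ∈ range ((m₁ * m₂).factorization q + 1), (H₁ * H₂) (q ^ k) * x ^ k
    = (∑ i ∈ range (m₁.factorization q + 1), H₁ (q ^ i) * x ^ i) *
      (∑ j ∈ range (m₂.factorization q + 1), H₂ (q ^ j) * x ^ j) := by
  have h1 : ∀ k : ℕ, (H₁ * H₂) (q ^ k) * x ^ k
      = ∑ i ∈ range (k + 1),
          (1 : ℂ) * ((H₁ (q ^ i) * x ^ i) * (H₂ (q ^ (k - i)) * x ^ (k - i))) := by
    intro k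
    rw [mul_apply_prime_pow _ _ hq, Finset.sum_mul]
    refine Finset.sum_congr rfl fun i hi => ?_
    rw [mem_range, Nat.lt_succ_iff] at hi
    have : x ^ i * x ^ (k - i) = x ^ k := by
      rw [← pow_add, Nat.add_sub_cancel' hi]
    ring_nf
    rw [← this]
    ring
  calc ∑ k ∈ range ((m₁ * m₂).factorization q + 1), (H₁ * H₂) (q ^ k) * x ^ k
      = ∑ k ∈ range ((m₁ * m₂).factorization q + 1), ∑ i ∈ range (k + 1),
          (1:ℂ) * ((H₁ (q ^ i) * x ^ i) * (H₂ (q ^ (k - i)) * x ^ (k - i))) :=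
        Finset.sum_congr rfl fun k _ => h1 k
    _ = ∑ i ∈ range (m₁.factorization q + 1), ∑ j ∈ range (m₂.factorization q + 1),
          (1:ℂ) * ((H₁ (q ^ i) * x ^ i) * (H₂ (q ^ j) * x ^ j)) :=
        G_pp_weighted H₁ H₂ m₁ m₂ hm₁ hm₂ hs₁ hs₂ hq x (fun _ _ => (1:ℂ))
    _ = (∑ i ∈ range (m₁.factorization q + 1), H₁ (q ^ i) * x ^ i) *
        (∑ j ∈ range (m₂.factorization q + 1), H₂ (q ^ j) * x ^ j) := by
        rw [Finset.sum_mul_sum]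
        exact Finset.sum_congr rfl fun i _ => Finset.sum_congr rfl fun j _ => by ring

lemma Lloc (hm₁ : m₁ ≠ 0) (hm₂ : m₂ ≠ 0)
    (hs₁ : ∀ p k : ℕ, p.Prime → m₁.factorization p < k → H₁ (p ^ k) = 0)
    (hs₂ : ∀ p k : ℕ, p.Prime → m₂.factorization p < k → H₂ (p ^ k) = 0)
    {q : ℕ} (hq : q.Prime) (x : ℂ)
    (hP₁ : ∑ i ∈ range (m₁.factorization q + 1), H₁ (q ^ i) * x ^ i = 0)
    (hP₂ : ∑ j ∈ range (m₂.factorization q + 1), H₂ (q ^ j) * x ^ j = 0) :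
    ∑ k ∈ range ((m₁ * m₂).factorization q + 1), (k : ℂ) * ((H₁ * H₂) (q ^ k) * x ^ k)
    = 0 := by
  have h1 : ∀ k : ℕ, (k : ℂ) * ((H₁ * H₂) (q ^ k) * x ^ k)
      = ∑ i ∈ range (k + 1),
          ((i : ℂ) + ((k - i : ℕ) : ℂ)) *
            ((H₁ (q ^ i) * x ^ i) * (H₂ (q ^ (k - i)) * x ^ (k - i))) := by
    intro k
    rw [mul_apply_prime_pow _ _ hq, Finset.sum_mul, Finset.mul_sum]
    refine Finset.sum_congr rfl fun i hi => ?_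
    rw [mem_range, Nat.lt_succ_iff] at hi
    have hx : x ^ i * x ^ (k - i) = x ^ k := by
      rw [← pow_add, Nat.add_sub_cancel' hi]
    have hk : ((i : ℂ) + ((k - i : ℕ) : ℂ)) = (k : ℂ) := by
      rw [← Nat.cast_add, Nat.add_sub_cancel' hi]
    rw [hk, ← hx]
    ring
  rw [Finset.sum_congr rfl fun k _ => h1 k,
    G_pp_weighted H₁ H₂ m₁ m₂ hm₁ hm₂ hs₁ hs₂ hq x (fun i j => (i : ℂ) + (j : ℂ))]
  have expand : ∑ i ∈ range (m₁.factorization q + 1), ∑ j ∈ range (m₂.factorization q + 1),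
      ((i:ℂ) + (j:ℂ)) * ((H₁ (q ^ i) * x ^ i) * (H₂ (q ^ j) * x ^ j))
      = (∑ i ∈ range (m₁.factorization q + 1), (i:ℂ) * (H₁ (q ^ i) * x ^ i)) *
          (∑ j ∈ range (m₂.factorization q + 1), H₂ (q ^ j) * x ^ j)
        + (∑ i ∈ range (m₁.factorization q + 1), H₁ (q ^ i) * x ^ i) *
          (∑ j ∈ range (m₂.factorization q + 1), (j:ℂ) * (H₂ (q ^ j) * x ^ j)) := by
    rw [Finset.sum_mul_sum, Finset.sum_mul_sum, ← Finset.sum_add_distrib]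
    refine Finset.sum_congr rfl fun i _ => ?_
    rw [← Finset.sum_add_distrib]
    refine Finset.sum_congr rfl fun j _ => by ring
  rw [expand, hP₁, hP₂]
  ring
end LocalLemmas

/-! ### The vanishing of the truncated series from condition (i) -/

lemma H_one (f : ℕ → ℂ) (hf1 : f 1 = 1) : (toAF f * ↑(moebius)) 1 = 1 := by
  simp [ArithmeticFunction.mul_apply, Nat.divisorsAntidiagonal_one, toAF_apply _ one_ne_zero, hf1]

lemma Peval_telescope (f : ℕ → ℂ) (hf1 : f 1 = 1) {q : ℕ} (hq : q.Prime) (x : ℂ) (a : ℕ) :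
    ∑ i ∈ range (a + 1), (toAF f * ↑(moebius)) (q ^ i) * x ^ i
    = (1 - x) * ∑ k ∈ range a, f (q ^ k) * x ^ k + f (q ^ a) * x ^ a := by
  induction a with
  | zero =>
    simp [H_one f hf1, hf1]
    exact (toAF_apply f one_ne_zero).trans hf1
  | succ a ih =>
    rw [Finset.sum_range_succ, ih, Finset.sum_range_succ (n := a),
      mul_moebius_prime_pow _ hq (by omega : 1 ≤ a + 1)]
    have : a + 1 - 1 = a := rfl
    rw [this, toAF_apply _ (pow_ne_zero _ hq.ne_zero), toAF_apply _ (pow_ne_zero _ hq.ne_zero)]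
    ring

lemma Peval_zero (f : ℕ → ℂ) (m : ℕ) (hm : m ≠ 0) (hf1 : f 1 = 1)
    (hcond : ∀ p a : ℕ, p.Prime → p ^ a ∣ m → ¬ p ^ (a + 1) ∣ m →
      ∀ k : ℕ, a ≤ k → f (p ^ k) = f (p ^ a))
    {q : ℕ} (hq : q.Prime) (htsum : ∑' k : ℕ, f (q ^ k) / (q : ℂ) ^ k = 0) :
    ∑ i ∈ range (m.factorization q + 1), (toAF f * ↑(moebius)) (q ^ i) * (1 / (q : ℂ)) ^ i
      = 0 := by
  set a := m.factorization q with ha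
  set x : ℂ := 1 / (q : ℂ) with hxdef
  have hq0 : (q : ℂ) ≠ 0 := Nat.cast_ne_zero.2 hq.ne_zero
  have hx : ‖x‖ < 1 := by
    rw [hxdef, norm_div, norm_one, Complex.norm_natCast]
    rw [div_lt_one (by exact_mod_cast hq.pos)]
    exact_mod_cast hq.one_lt
  have hx1 : (1 : ℂ) - x ≠ 0 := by
    intro h
    rw [sub_eq_zero] at h
    rw [← h] at hx
    simp at hx
  have hterm : ∀ k : ℕ, f (q ^ k) / (q : ℂ) ^ k = f (q ^ k) * x ^ k := by
    intro k
    rw [hxdef, div_pow, one_pow, div_eq_mul_inv, div_eq_mul_inv, one_mul]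
  set c : ℂ := f (q ^ a) with hc
  have hfk : ∀ k, a ≤ k → f (q ^ k) = c :=
    hcond q a hq (Nat.ordProj_dvd m q) (Nat.pow_succ_factorization_not_dvd hm hq)
  have hsum_shift : Summable (fun k : ℕ => f (q ^ (k + a)) * x ^ (k + a)) := by
    have : (fun k : ℕ => f (q ^ (k + a)) * x ^ (k + a))
        = fun k : ℕ => (c * x ^ a) * x ^ k := by
      funext k
      rw [hfk (k + a) (by omega), pow_add]
      ring
    rw [this]
    exact (summable_geometric_of_norm_lt_one hx).mul_left _
  have hsum : Summable (fun k : ℕ => f (q ^ k) * x ^ k) :=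
    (summable_nat_add_iff a).1 hsum_shift
  have htail : ∑' k : ℕ, f (q ^ (k + a)) * x ^ (k + a) = c * x ^ a * (1 - x)⁻¹ := by
    have h1 : (fun k : ℕ => f (q ^ (k + a)) * x ^ (k + a))
        = fun k : ℕ => (c * x ^ a) * x ^ k := by
      funext k
      rw [hfk (k + a) (by omega), pow_add]
      ring
    rw [h1, tsum_mul_left, tsum_geometric_of_norm_lt_one hx]
  have hsplit := Summable.sum_add_tsum_nat_add a hsum
  rw [htail] at hsplit
  have hT : ∑' k : ℕ, f (q ^ k) * x ^ k = 0 := by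
    rw [← htsum]
    exact tsum_congr fun k => (hterm k).symm
  rw [hT] at hsplit
  have hmain : (1 - x) * ∑ k ∈ range a, f (q ^ k) * x ^ k + c * x ^ a = 0 := by
    have := congrArg (fun z => (1 - x) * z) hsplit.symm
    simp only [mul_zero, mul_add] at this
    rw [← mul_assoc ((1:ℂ) - x), mul_comm ((1:ℂ)-x) (c * x ^ a), mul_assoc,
      mul_inv_cancel₀ hx1, mul_one] at this
    exact this.symm
  rw [Peval_telescope f hf1 hq x a, hmain]

/-! ### Coprime splitting of divisor sums -/

lemma sum_divisors_coprime_mul {A B : ℕ} (hA : A ≠ 0) (hB : B ≠ 0) (hAB : A.Coprime B)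
    (F : ℕ → ℂ) :
    ∑ d ∈ (A * B).divisors, F d = ∑ p ∈ A.divisors ×ˢ B.divisors, F (p.1 * p.2) := by
  refine Finset.sum_nbij' (fun d => (d.gcd A, d.gcd B)) (fun p => p.1 * p.2) ?_ ?_ ?_ ?_ ?_
  · intro d hd
    rw [Nat.mem_divisors] at hd
    rw [Finset.mem_product, Nat.mem_divisors, Nat.mem_divisors]
    exact ⟨⟨Nat.gcd_dvd_right _ _, hA⟩, ⟨Nat.gcd_dvd_right _ _, hB⟩⟩
  · rintro ⟨a, b⟩ hp
    rw [Finset.mem_product, Nat.mem_divisors, Nat.mem_divisors] at hp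
    rw [Nat.mem_divisors]
    exact ⟨mul_dvd_mul hp.1.1 hp.2.1, Nat.mul_ne_zero hA hB⟩
  · intro d hd
    rw [Nat.mem_divisors] at hd
    show d.gcd A * d.gcd B = d
    rw [← Nat.Coprime.gcd_mul d hAB]
    exact Nat.gcd_eq_left hd.1
  · rintro ⟨a, b⟩ hp
    rw [Finset.mem_product, Nat.mem_divisors, Nat.mem_divisors] at hp
    have hbA : Nat.Coprime b A := (Nat.Coprime.coprime_dvd_left hp.2.1 hAB.symm)
    have haB : Nat.Coprime a B := (Nat.Coprime.coprime_dvd_left hp.1.1 hAB)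
    have h1 : (a * b).gcd A = a := by
      rw [mul_comm, Nat.Coprime.gcd_mul_left_cancel a hbA, Nat.gcd_eq_left hp.1.1]
    have h2 : (a * b).gcd B = b := by
      rw [Nat.Coprime.gcd_mul_left_cancel b haB, Nat.gcd_eq_left hp.2.1]
    simp [h1, h2]
  · intro d hd
    rw [Nat.mem_divisors] at hd
    have : d.gcd A * d.gcd B = d := by
      rw [← Nat.Coprime.gcd_mul d hAB, Nat.gcd_eq_left hd.1]
    rw [this]

/-! ### The weighted divisor sums `Zf` and `Lf` -/

noncomputable def Zf (G : ArithmeticFunction ℂ) (N : ℕ) : ℂ :=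
  ∑ d ∈ N.divisors, G d / (d : ℂ)
noncomputable def Lf (G : ArithmeticFunction ℂ) (N : ℕ) : ℂ :=
  ∑ d ∈ N.divisors, G d * (Real.log d : ℂ) / (d : ℂ)

lemma Zf_mul (G : ArithmeticFunction ℂ) (hG : G.IsMultiplicative) {A B : ℕ}
    (hA : A ≠ 0) (hB : B ≠ 0) (hAB : A.Coprime B) :
    Zf G (A * B) = Zf G A * Zf G B := by
  unfold Zf
  rw [sum_divisors_coprime_mul hA hB hAB, Finset.sum_mul_sum, ← Finset.sum_product']
  refine Finset.sum_congr rfl ?_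
  rintro ⟨a, b⟩ hp
  rw [Finset.mem_product, Nat.mem_divisors, Nat.mem_divisors] at hp
  have hab : a.Coprime b :=
    Nat.Coprime.coprime_dvd_left hp.1.1 (Nat.Coprime.coprime_dvd_right hp.2.1 hAB)
  rw [hG.map_mul_of_coprime hab, Nat.cast_mul]
  ring

lemma Lf_mul (G : ArithmeticFunction ℂ) (hG : G.IsMultiplicative) {A B : ℕ}
    (hA : A ≠ 0) (hB : B ≠ 0) (hAB : A.Coprime B) :
    Lf G (A * B) = Lf G A * Zf G B + Zf G A * Lf G B := by
  unfold Zf Lf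
  rw [sum_divisors_coprime_mul hA hB hAB, Finset.sum_product]
  have step1 : ∀ a ∈ A.divisors, ∀ b ∈ B.divisors,
      G (a * b) * (Real.log (a * b : ℕ) : ℂ) / ((a * b : ℕ) : ℂ)
      = (G a * (Real.log a : ℂ) / a) * (G b / b) + (G a / a) * (G b * (Real.log b : ℂ) / b) := by
    intro a ha b hb
    have ha0 : (a : ℝ) ≠ 0 := Nat.cast_ne_zero.2 (Nat.pos_of_mem_divisors ha).ne'
    have hb0 : (b : ℝ) ≠ 0 := Nat.cast_ne_zero.2 (Nat.pos_of_mem_divisors hb).ne'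
    have hab : a.Coprime b := Nat.Coprime.coprime_dvd_left (Nat.mem_divisors.1 ha).1
      (Nat.Coprime.coprime_dvd_right (Nat.mem_divisors.1 hb).1 hAB)
    have hlog : Real.log ((a * b : ℕ) : ℝ) = Real.log a + Real.log b := by
      push_cast
      exact Real.log_mul ha0 hb0
    rw [hG.map_mul_of_coprime hab, hlog, Nat.cast_mul]
    push_cast
    ring
  rw [Finset.sum_congr rfl (fun a ha => Finset.sum_congr rfl (fun b hb => step1 a ha b hb))]
  rw [Finset.sum_congr rfl (fun a _ => Finset.sum_add_distrib)]
  rw [Finset.sum_add_distrib]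
  congr 1
  · rw [Finset.sum_mul_sum]
  · rw [Finset.sum_mul_sum]

lemma Zf_pp (G : ArithmeticFunction ℂ) {q : ℕ} (hq : q.Prime) (V : ℕ) :
    Zf G (q ^ V) = ∑ k ∈ range (V + 1), G (q ^ k) * (1 / (q : ℂ)) ^ k := by
  unfold Zf
  rw [Nat.sum_divisors_prime_pow hq]
  refine Finset.sum_congr rfl fun k _ => ?_
  rw [Nat.cast_pow, div_pow, one_pow]
  rw [div_eq_mul_inv, div_eq_mul_inv, one_mul]

lemma Lf_pp (G : ArithmeticFunction ℂ) {q : ℕ} (hq : q.Prime) (V : ℕ) :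
    Lf G (q ^ V) = ((Real.log q : ℝ) : ℂ) *
      ∑ k ∈ range (V + 1), (k : ℂ) * (G (q ^ k) * (1 / (q : ℂ)) ^ k) := by
  unfold Lf
  rw [Nat.sum_divisors_prime_pow hq, Finset.mul_sum]
  refine Finset.sum_congr rfl fun k _ => ?_
  have hlog : Real.log ((q : ℝ) ^ k) = k * Real.log q := Real.log_pow ..
  rw [Nat.cast_pow, Nat.cast_pow, hlog]
  push_cast
  rw [div_eq_mul_inv, div_pow, one_pow, div_eq_mul_inv]
  ring

/-! ### Vanishing of `Zf` and `Lf` at `m₁ * m₂` -/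

lemma ZL_zero (H₁ H₂ : ArithmeticFunction ℂ) (m₁ m₂ : ℕ) (hm₁ : m₁ ≠ 0) (hm₂ : m₂ ≠ 0)
    (hs₁ : ∀ p k : ℕ, p.Prime → m₁.factorization p < k → H₁ (p ^ k) = 0)
    (hs₂ : ∀ p k : ℕ, p.Prime → m₂.factorization p < k → H₂ (p ^ k) = 0)
    (hG : (H₁ * H₂).IsMultiplicative)
    {q₁ q₂ : ℕ} (hq₁ : q₁.Prime) (hq₂ : q₂.Prime)
    (hP₁ : ∑ i ∈ range (m₁.factorization q₁ + 1), H₁ (q₁ ^ i) * (1 / (q₁ : ℂ)) ^ i = 0)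
    (hP₂ : ∑ j ∈ range (m₂.factorization q₂ + 1), H₂ (q₂ ^ j) * (1 / (q₂ : ℂ)) ^ j = 0) :
    Zf (H₁ * H₂) (m₁ * m₂) = 0 ∧ Lf (H₁ * H₂) (m₁ * m₂) = 0 := by
  set G := H₁ * H₂ with hGdef
  set M := m₁ * m₂ with hMdef
  have hM : M ≠ 0 := Nat.mul_ne_zero hm₁ hm₂
  set v := M.factorization q₁ with hv
  set A := q₁ ^ v with hA
  set B := ordCompl[q₁] M with hB
  have hMAB : M = A * B := (Nat.ordProj_mul_ordCompl_eq_self M q₁).symm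
  have hA0 : A ≠ 0 := pow_ne_zero _ hq₁.ne_zero
  have hB0 : B ≠ 0 := (Nat.ordCompl_pos q₁ hM).ne'
  have hcop : A.Coprime B := Nat.Coprime.pow_left _ (Nat.coprime_ordCompl hq₁ hM)
  have hZA : Zf G A = 0 := by
    rw [hA, Zf_pp G hq₁ v, hv, Zloc H₁ H₂ m₁ m₂ hm₁ hm₂ hs₁ hs₂ hq₁, hP₁, zero_mul]
  have hZM : Zf G M = 0 := by
    rw [hMAB, Zf_mul G hG hA0 hB0 hcop, hZA, zero_mul]
  refine ⟨hZM, ?_⟩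
  rw [hMAB, Lf_mul G hG hA0 hB0 hcop, hZA, zero_mul, add_zero]
  rcases eq_or_ne q₂ q₁ with rfl | hne
  · have hLA : Lf G A = 0 := by
      rw [hA, Lf_pp G hq₁ v, hv,
        Lloc H₁ H₂ m₁ m₂ hm₁ hm₂ hs₁ hs₂ hq₁ _ hP₁ hP₂, mul_zero]
    rw [hLA, zero_mul]
  · have hZB : Zf G B = 0 := by
      set w := B.factorization q₂ with hw
      have hwM : w = M.factorization q₂ := by
        rw [hw, hB, Nat.factorization_ordCompl M q₁, Finsupp.erase_ne hne]
      set C := ordCompl[q₂] B with hC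
      have hBAC : B = q₂ ^ w * C := (Nat.ordProj_mul_ordCompl_eq_self B q₂).symm
      have hq2w0 : (q₂ : ℕ) ^ w ≠ 0 := pow_ne_zero _ hq₂.ne_zero
      have hC0 : C ≠ 0 := (Nat.ordCompl_pos q₂ hB0).ne'
      have hcop2 : ((q₂ : ℕ) ^ w).Coprime C :=
        Nat.Coprime.pow_left _ (Nat.coprime_ordCompl hq₂ hB0)
      have hZq2 : Zf G (q₂ ^ w) = 0 := by
        rw [Zf_pp G hq₂ w, hwM, Zloc H₁ H₂ m₁ m₂ hm₁ hm₂ hs₁ hs₂ hq₂, hP₂, mul_zero]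
      rw [hBAC, Zf_mul G hG hq2w0 hC0 hcop2, hZq2, zero_mul]
    rw [hZB, mul_zero]

/-! ### The hyperbola-type rearrangement -/

lemma hyperbola (G : ArithmeticFunction ℂ) (T : ℕ → ℂ) (N : ℕ) :
    ∑ n ∈ Finset.Icc 1 N, ∑ p ∈ n.divisorsAntidiagonal, G p.1 * T p.2
    = ∑ d ∈ Finset.Icc 1 N, G d * ∑ e ∈ Finset.Icc 1 (N / d), T e := by
  have hR : ∀ d : ℕ, G d * ∑ e ∈ Finset.Icc 1 (N / d), T e
      = ∑ e ∈ Finset.Icc 1 (N / d), G d * T e := fun d => Finset.mul_sum _ _ _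
  rw [Finset.sum_congr rfl fun d _ => hR d, Finset.sum_sigma', Finset.sum_sigma']
  refine Finset.sum_nbij' (fun y => ⟨y.2.1, y.2.2⟩) (fun y => ⟨y.1 * y.2, (y.1, y.2)⟩)
    ?_ ?_ ?_ ?_ ?_
  · rintro ⟨n, d, e⟩ h
    rw [Finset.mem_sigma, Finset.mem_Icc] at h
    obtain ⟨hn, hde⟩ := h
    rw [Nat.mem_divisorsAntidiagonal] at hde
    obtain ⟨hprod, hn0⟩ := hde
    have hde0 : d ≠ 0 ∧ e ≠ 0 := by
      rw [← Nat.mul_ne_zero_iff, hprod]; exact hn0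
    have hd1 : 1 ≤ d := Nat.pos_of_ne_zero hde0.1
    have he1 : 1 ≤ e := Nat.pos_of_ne_zero hde0.2
    rw [Finset.mem_sigma, Finset.mem_Icc, Finset.mem_Icc]
    refine ⟨⟨hd1, ?_⟩, he1, ?_⟩
    · calc d ≤ d * e := Nat.le_mul_of_pos_right d he1
        _ = n := hprod
        _ ≤ N := hn.2
    · rw [Nat.le_div_iff_mul_le hd1]
      rw [mul_comm]
      calc d * e = n := hprod
        _ ≤ N := hn.2
  · rintro ⟨d, e⟩ h
    rw [Finset.mem_sigma, Finset.mem_Icc, Finset.mem_Icc] at h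
    obtain ⟨⟨hd1, hdN⟩, he1, heN⟩ := h
    rw [Finset.mem_sigma, Finset.mem_Icc, Nat.mem_divisorsAntidiagonal]
    have hdeN : d * e ≤ N := by
      rw [Nat.le_div_iff_mul_le hd1] at heN
      rwa [mul_comm]
    exact ⟨⟨Nat.one_le_iff_ne_zero.2 (Nat.mul_ne_zero (by omega) (by omega)), hdeN⟩,
      rfl, Nat.mul_ne_zero (by omega) (by omega)⟩
  · rintro ⟨n, d, e⟩ h
    rw [Finset.mem_sigma] at h
    have hprod : d * e = n := (Nat.mem_divisorsAntidiagonal.1 h.2).1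
    subst hprod
    rfl
  · rintro ⟨d, e⟩ h
    rfl
  · rintro ⟨n, d, e⟩ h
    rfl

/-! ### The divisor function as `ζ * ζ` -/

lemma tau_eq (e : ℕ) (he : e ≠ 0) :
    ((↑(ζ) * ↑(ζ) : ArithmeticFunction ℂ)) e = ((e.divisors.card : ℝ) : ℂ) := by
  rw [mul_apply, Nat.sum_divisorsAntidiagonal
    (fun a b => (↑(ζ) : ArithmeticFunction ℂ) a * (↑(ζ) : ArithmeticFunction ℂ) b)]
  have : ∀ d ∈ e.divisors, (↑(ζ) : ArithmeticFunction ℂ) d *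
      (↑(ζ) : ArithmeticFunction ℂ) (e / d) = 1 := by
    intro d hd
    have hd0 : d ≠ 0 := (Nat.pos_of_mem_divisors hd).ne'
    have hed0 : e / d ≠ 0 := by
      have hdvd := (Nat.mem_divisors.1 hd).1
      exact (Nat.div_pos (Nat.le_of_dvd (Nat.pos_of_ne_zero he) hdvd)
        (Nat.pos_of_mem_divisors hd)).ne'
    rw [natCoe_apply, natCoe_apply, zeta_apply, zeta_apply, if_neg hd0, if_neg hed0]
    norm_num
  rw [Finset.sum_congr rfl this, Finset.sum_const, nsmul_eq_mul, mul_one]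
  push_cast
  rfl

/-! ### Main theorem -/

theorem stmt_4 (f₁ f₂ : ℕ → ℂ) (m₁ m₂ : ℕ) (hm₁ : 1 ≤ m₁) (hm₂ : 1 ≤ m₂)
    (hmul₁ : IsMultiplicativeFn f₁) (hmul₂ : IsMultiplicativeFn f₂)
    (h₁ : SatisfiesConds f₁ m₁) (h₂ : SatisfiesConds f₂ m₂) :
    ∀ x : ℝ, (m₁ * m₂ : ℝ) < x →
      ∑ n ∈ Finset.Icc 1 ⌊x⌋₊, dconv f₁ f₂ n =
        ∑ n ∈ (m₁ * m₂).divisors,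
          dconv (dconv (dconv f₁ f₂) moebiusC) moebiusC n * (Δ (x / n) : ℂ) := by
  intro x hx
  have hm₁0 : m₁ ≠ 0 := by omega
  have hm₂0 : m₂ ≠ 0 := by omega
  set M := m₁ * m₂ with hMdef
  have hM0 : M ≠ 0 := Nat.mul_ne_zero hm₁0 hm₂0
  have hxM : (M : ℝ) < x := by rw [hMdef]; push_cast; exact hx
  have hM1 : (1 : ℝ) ≤ (M : ℝ) := by exact_mod_cast Nat.one_le_iff_ne_zero.2 hM0
  have hx0 : 0 < x := lt_of_lt_of_le (by norm_num) (le_of_lt (lt_of_le_of_lt hM1 hxM))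
  set N := ⌊x⌋₊ with hN
  have hMN : M ≤ N := Nat.le_floor hxM.le
  set F₁ := toAF f₁ with hF₁
  set F₂ := toAF f₂ with hF₂
  set H₁ := F₁ * (↑(moebius) : ArithmeticFunction ℂ) with hH₁
  set H₂ := F₂ * (↑(moebius) : ArithmeticFunction ℂ) with hH₂
  set G := H₁ * H₂ with hG
  have hμmult : (↑(moebius) : ArithmeticFunction ℂ).IsMultiplicative :=
    isMultiplicative_moebius.intCast
  have hGmult : G.IsMultiplicative :=
    ((toAF_mult f₁ hmul₁).mul hμmult).mul ((toAF_mult f₂ hmul₂).mul hμmult)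
  have hs₁ : ∀ p k : ℕ, p.Prime → m₁.factorization p < k → H₁ (p ^ k) = 0 :=
    fun p k hp hk => H_support f₁ m₁ hm₁0 h₁.2.1 hp hk
  have hs₂ : ∀ p k : ℕ, p.Prime → m₂.factorization p < k → H₂ (p ^ k) = 0 :=
    fun p k hp hk => H_support f₂ m₂ hm₂0 h₂.2.1 hp hk
  obtain ⟨q₁, hq₁p, hq₁d, htsum₁⟩ := h₁.1
  obtain ⟨q₂, hq₂p, hq₂d, htsum₂⟩ := h₂.1
  have hP₁ := Peval_zero f₁ m₁ hm₁0 hmul₁.1 h₁.2.1 hq₁p htsum₁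
  have hP₂ := Peval_zero f₂ m₂ hm₂0 hmul₂.1 h₂.2.1 hq₂p htsum₂
  obtain ⟨hZM, hLM⟩ := ZL_zero H₁ H₂ m₁ m₂ hm₁0 hm₂0 hs₁ hs₂ hGmult hq₁p hq₂p hP₁ hP₂
  -- the convolution identity `f₁ ∗ f₂ = G ∗ ζ ∗ ζ`
  have hconv : F₁ * F₂ = G * ((↑(ζ) : ArithmeticFunction ℂ) * ↑(ζ)) := by
    have h1 : G * ((↑(ζ) : ArithmeticFunction ℂ) * ↑(ζ))
        = (F₁ * F₂) * (((↑(moebius) : ArithmeticFunction ℂ) * ↑(ζ)) *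
            ((↑(moebius) : ArithmeticFunction ℂ) * ↑(ζ))) := by
      rw [hG, hH₁, hH₂]; ring
    rw [h1, coe_moebius_mul_coe_zeta, mul_one, mul_one]
  -- the triple convolution in the statement is `G`
  have htriple : ∀ n : ℕ, dconv (dconv (dconv f₁ f₂) moebiusC) moebiusC n = G n := by
    intro n
    rw [dconv_eq, toAF_dconv, toAF_dconv, toAF_moebiusC]
    have : F₁ * F₂ * ↑(moebius) * ↑(moebius) = G := by
      rw [hG, hH₁, hH₂]; ring
    rw [this]
  -- hyperbola rearrangement
  have hLHS1 : ∑ n ∈ Finset.Icc 1 N, dconv f₁ f₂ n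
      = ∑ d ∈ Finset.Icc 1 N, G d *
          ∑ e ∈ Finset.Icc 1 (N / d), ((↑(ζ) : ArithmeticFunction ℂ) * ↑(ζ)) e := by
    calc ∑ n ∈ Finset.Icc 1 N, dconv f₁ f₂ n
        = ∑ n ∈ Finset.Icc 1 N, ∑ p ∈ n.divisorsAntidiagonal,
            G p.1 * ((↑(ζ) : ArithmeticFunction ℂ) * ↑(ζ)) p.2 := by
          refine Finset.sum_congr rfl fun n _ => ?_
          rw [dconv_eq, hconv, mul_apply]
      _ = _ := hyperbola G _ N
  -- restrict to divisors of M
  have hsubset : M.divisors ⊆ Finset.Icc 1 N := by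
    intro d hd
    rw [Finset.mem_Icc]
    exact ⟨Nat.pos_of_mem_divisors hd,
      le_trans (Nat.le_of_dvd (Nat.pos_of_ne_zero hM0) (Nat.mem_divisors.1 hd).1) hMN⟩
  have hrestrict : ∑ d ∈ Finset.Icc 1 N, G d *
        ∑ e ∈ Finset.Icc 1 (N / d), ((↑(ζ) : ArithmeticFunction ℂ) * ↑(ζ)) e
      = ∑ d ∈ M.divisors, G d *
        ∑ e ∈ Finset.Icc 1 (N / d), ((↑(ζ) : ArithmeticFunction ℂ) * ↑(ζ)) e := by
    refine (Finset.sum_subset hsubset ?_).symm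
    intro d hd hnot
    have hd1 : 1 ≤ d := (Finset.mem_Icc.1 hd).1
    have hnd : ¬ d ∣ M := by
      intro hdvd
      exact hnot (Nat.mem_divisors.2 ⟨hdvd, hM0⟩)
    rw [G_support G hGmult M hM0
      (fun p k hp hk => G_support_pp H₁ H₂ m₁ m₂ hm₁0 hm₂0 hs₁ hs₂ hp hk)
      (by omega : d ≠ 0) hnd, zero_mul]
  -- evaluate the inner sums
  set γ : ℝ := Real.eulerMascheroniConstant with hγ
  have hinner : ∀ d ∈ M.divisors,
      G d * ∑ e ∈ Finset.Icc 1 (N / d), ((↑(ζ) : ArithmeticFunction ℂ) * ↑(ζ)) e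
      = G d * ((Δ (x / d) : ℝ) : ℂ)
        + ((x : ℂ) * ((Real.log x : ℝ) + (2 * (γ : ℂ) - 1))) * (G d / (d : ℂ))
        - (x : ℂ) * (G d * ((Real.log d : ℝ) : ℂ) / (d : ℂ)) := by
    intro d hd
    have hd1 : 1 ≤ d := Nat.pos_of_mem_divisors hd
    have hd0R : (0 : ℝ) < (d : ℝ) := by exact_mod_cast hd1
    have hfloor : ⌊x / (d : ℝ)⌋₊ = N / d := by rw [hN, Nat.floor_div_natCast]
    have hSd : ∑ e ∈ Finset.Icc 1 (N / d), ((↑(ζ) : ArithmeticFunction ℂ) * ↑(ζ)) e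
        = (((∑ e ∈ Finset.Icc 1 ⌊x / (d : ℝ)⌋₊, (e.divisors.card : ℝ)) : ℝ) : ℂ) := by
      rw [hfloor]
      push_cast
      refine Finset.sum_congr rfl fun e he => ?_
      have he1 : 1 ≤ e := (Finset.mem_Icc.1 he).1
      rw [tau_eq e (by omega)]
      norm_cast
    have hΔ : ((∑ e ∈ Finset.Icc 1 ⌊x / (d : ℝ)⌋₊, (e.divisors.card : ℝ)) : ℝ)
        = Δ (x / d) + (x / d) * Real.log (x / d) + (2 * γ - 1) * (x / d) := by
      rw [Δ]; ring
    have hlogdiv : Real.log (x / d) = Real.log x - Real.log d :=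
      Real.log_div hx0.ne' hd0R.ne'
    rw [hSd, hΔ, hlogdiv]
    have hdC : ((d : ℝ) : ℂ) ≠ 0 := by exact_mod_cast hd0R.ne'
    push_cast
    field_simp
    ring
  rw [hLHS1, hrestrict, Finset.sum_congr rfl hinner]
  rw [Finset.sum_sub_distrib, Finset.sum_add_distrib, ← Finset.mul_sum, ← Finset.mul_sum]
  have hZ' : ∑ d ∈ M.divisors, G d / (d : ℂ) = 0 := hZM
  have hL' : ∑ d ∈ M.divisors, G d * ((Real.log d : ℝ) : ℂ) / (d : ℂ) = 0 := hLM
  rw [hZ', hL', mul_zero, mul_zero, add_zero, sub_zero]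
  exact Finset.sum_congr rfl fun d hd => by rw [htriple d]
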